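/- Let Ω ⊂ ℝᴺ be a measurable set of finite Lebesgue measure, 0 < γ < 1, and let u, v : Ω → [0,∞) be measurable with u > 0 almost everywhere, u^{1−γ} integrable on Ω, and v bounded. For 0 < t < 1/3 set v_t = (1 − 2t)u + t(v − u)⁺. Then limsup_{t → 0⁺} (1/t) ∫_Ω (v_t^{1−γ} − u^{1−γ})/(1 − γ) dx ≥ −2 ∫_{[v ≤ u]} u^{1−γ} dx + ∫_{[v > u]} (−3u^{1−γ} + u^{−γ} v) dx, where the last integral takes values in (−∞, +∞] and [v ≤ u] = {x ∈ Ω : v(x) ≤ u(x)}, [v > u] = {x ∈ Ω : v(x) > u(x)}. Equivalently, the right-hand side equals ∫_Ω u^{−γ}(−2u + (v − u)⁺) dx. -/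

import Mathlib

open MeasureTheory Filter Set
open scoped ENNReal

lemma aux_bern {p : ℝ} (hp0 : 0 ≤ p) (hp1 : p ≤ 1) {a b : ℝ} (ha : 0 ≤ a) (hb : 0 < b) :
    a ^ p ≤ b ^ p + p * b ^ (p - 1) * (a - b) := by
  have hz : -1 ≤ a / b - 1 := by
    have : 0 ≤ a / b := div_nonneg ha hb.le
    linarith
  have h := rpow_one_add_le_one_add_mul_self hz hp0 hp1
  have hab : (1 + (a / b - 1)) = a / b := by ring
  rw [hab] at h
  have hbp : (0:ℝ) < b ^ p := Real.rpow_pos_of_pos hb p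
  have h2 : (a / b) ^ p * b ^ p ≤ (1 + p * (a / b - 1)) * b ^ p :=
    mul_le_mul_of_nonneg_right h hbp.le
  have h3 : (a / b) ^ p * b ^ p = a ^ p := by
    rw [Real.div_rpow ha hb.le, div_mul_cancel₀]
    exact hbp.ne'
  have h4 : b ^ (p - 1) = b ^ p / b := by
    rw [Real.rpow_sub hb, Real.rpow_one]
  rw [h3] at h2
  calc a ^ p ≤ (1 + p * (a / b - 1)) * b ^ p := h2
    _ = b ^ p + p * (b ^ p / b) * (a - b) := by field_simp
    _ = b ^ p + p * b ^ (p - 1) * (a - b) := by rw [h4]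

lemma aux_key {γ U V t : ℝ} (hγ0 : 0 < γ) (hγ1 : γ < 1) (hU : 0 < U)
    (ht0 : 0 < t) (ht3 : t < 1/3) :
    ((1 - 2*t) * U + t * max (V - U) 0) ^ (-γ) * (-2*U + max (V - U) 0)
      ≤ ((((1 - 2*t) * U + t * max (V - U) 0) ^ (1-γ) - U ^ (1-γ)) / (1-γ)) / t := by
  set m : ℝ := max (V - U) 0 with hm
  have hm0 : 0 ≤ m := le_max_right _ _
  set W : ℝ := (1 - 2*t) * U + t * m with hWdef
  have hW : 0 < W := by
    have : 0 < (1 - 2*t) * U := by nlinarith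
    nlinarith
  have h := aux_bern (p := 1 - γ) (by linarith) (by linarith) hU.le hW
  have he : (1 - γ) - 1 = -γ := by ring
  rw [he] at h
  have hUW : U - W = -(t * (-2*U + m)) := by rw [hWdef]; ring
  rw [hUW] at h
  rw [div_div, le_div_iff₀ (mul_pos (by linarith : (0:ℝ) < 1 - γ) ht0)]
  nlinarith [h]

lemma aux_lower {γ U V t : ℝ} (hγ0 : 0 < γ) (hγ1 : γ < 1) (hU : 0 < U)
    (ht0 : 0 < t) (ht3 : t < 1/3) :
    -6 * U ^ (1-γ) ≤ ((1 - 2*t) * U + t * max (V - U) 0) ^ (-γ) * (-2*U + max (V - U) 0) := by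
  set m : ℝ := max (V - U) 0 with hm
  have hm0 : 0 ≤ m := le_max_right _ _
  set W : ℝ := (1 - 2*t) * U + t * m with hWdef
  have hW3 : U / 3 ≤ W := by nlinarith
  have hW : 0 < W := lt_of_lt_of_le (by positivity) hW3
  have hUp : (0:ℝ) ≤ U ^ (1-γ) := Real.rpow_nonneg hU.le _
  rcases le_or_gt 0 (-2*U + m) with hc | hc
  · have : 0 ≤ W ^ (-γ) * (-2*U + m) :=
      mul_nonneg (Real.rpow_nonneg hW.le _) hc
    linarith
  · have h1 : W ^ (-γ) ≤ (U/3) ^ (-γ) :=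
      Real.rpow_le_rpow_of_nonpos (by positivity) hW3 (by linarith)
    have h2 : (U/3 : ℝ) ^ (-γ) = U ^ (-γ) * 3 ^ γ := by
      rw [Real.div_rpow hU.le (by norm_num : (0:ℝ) ≤ 3), Real.rpow_neg (by norm_num : (0:ℝ) ≤ 3)]
      field_simp
    have h3 : (3:ℝ) ^ γ ≤ 3 := by
      calc (3:ℝ) ^ γ ≤ 3 ^ (1:ℝ) :=
        Real.rpow_le_rpow_of_exponent_le (by norm_num) hγ1.le
      _ = 3 := Real.rpow_one 3
    have hUγ : (0:ℝ) ≤ U ^ (-γ) := Real.rpow_nonneg hU.le _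
    have h30 : (0:ℝ) < 3 ^ γ := Real.rpow_pos_of_pos (by norm_num) _
    have h4 : W ^ (-γ) ≤ 3 * U ^ (-γ) := by
      calc W ^ (-γ) ≤ U ^ (-γ) * 3 ^ γ := h2 ▸ h1
        _ ≤ U ^ (-γ) * 3 := by nlinarith
        _ = 3 * U ^ (-γ) := by ring
    have h5 : 3 * U ^ (-γ) * (-2*U + m) ≤ W ^ (-γ) * (-2*U + m) :=
      mul_le_mul_of_nonpos_right h4 hc.le
    have h6 : U ^ (1-γ) = U ^ (-γ) * U := by
      rw [show (1-γ) = -γ + 1 by ring, Real.rpow_add hU, Real.rpow_one]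
    nlinarith [h5]

lemma aux_subadd {a b p : ℝ} (ha : 0 ≤ a) (hb : 0 ≤ b) (hp0 : 0 ≤ p) (hp1 : p ≤ 1) :
    (a + b) ^ p ≤ a ^ p + b ^ p := by
  have h := NNReal.rpow_add_le_add_rpow a.toNNReal b.toNNReal hp0 hp1
  have := NNReal.coe_le_coe.mpr h
  push_cast [NNReal.coe_rpow] at this
  rwa [Real.coe_toNNReal a ha, Real.coe_toNNReal b hb] at this

/-- With `v_t = (1 − 2t)u + t(v − u)⁺` (for `0 < t < 1/3`),
`limsup_{t→0⁺} (1/t) ∫_Ω (v_t^{1−γ} − u^{1−γ})/(1−γ)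
  ≥ −2∫_{[v ≤ u]} u^{1−γ} + ∫_{[v > u]} (−3u^{1−γ} + u^{−γ}v)`,
where the right-hand side takes values in `(−∞, +∞]` (formalized in `EReal`,
splitting the last integral into its finite part and its nonnegative singular part). -/
theorem stmt7
    (N : ℕ) (Ω : Set (EuclideanSpace ℝ (Fin N))) (hΩ : MeasurableSet Ω)
    (hfin : volume Ω < ⊤)
    (γ : ℝ) (hγ0 : 0 < γ) (hγ1 : γ < 1)
    (u v : EuclideanSpace ℝ (Fin N) → ℝ)
    (humeas : Measurable u) (hvmeas : Measurable v)
    (hu0 : ∀ x ∈ Ω, 0 ≤ u x) (hv0 : ∀ x ∈ Ω, 0 ≤ v x)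
    (hupos : ∀ᵐ x ∂(volume.restrict Ω), 0 < u x)
    (huint : IntegrableOn (fun x => u x ^ (1 - γ)) Ω)
    (hvbdd : ∃ M : ℝ, ∀ x ∈ Ω, v x ≤ M) :
    (((-2 * (∫ x in {x ∈ Ω | v x ≤ u x}, u x ^ (1 - γ))
        - 3 * (∫ x in {x ∈ Ω | u x < v x}, u x ^ (1 - γ))) : ℝ) : EReal)
      + ENNReal.toEReal (∫⁻ x in {x ∈ Ω | u x < v x}, ENNReal.ofReal (u x ^ (-γ) * v x))
    ≤ Filter.limsup
        (fun t : ℝ =>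
          (((∫ x in Ω, (((1 - 2*t) * u x + t * max (v x - u x) 0) ^ (1 - γ)
              - u x ^ (1 - γ)) / (1 - γ)) / t : ℝ) : EReal))
        (nhdsWithin 0 (Set.Ioo 0 (1/3 : ℝ))) := by
  classical
  obtain ⟨M, hM⟩ := hvbdd
  set C : ℝ := max M 0 with hCdef
  have hC0 : 0 ≤ C := le_max_right _ _
  have hp0 : (0:ℝ) < 1 - γ := by linarith
  set S₁ : Set (EuclideanSpace ℝ (Fin N)) := {x ∈ Ω | v x ≤ u x} with hS1def
  set S₂ : Set (EuclideanSpace ℝ (Fin N)) := {x ∈ Ω | u x < v x} with hS2def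
  have hS1m : MeasurableSet S₁ := hΩ.inter (measurableSet_le hvmeas humeas)
  have hS2m : MeasurableSet S₂ := hΩ.inter (measurableSet_lt humeas hvmeas)
  have hunion : S₁ ∪ S₂ = Ω := by
    ext x
    simp only [hS1def, hS2def, mem_union, mem_setOf_eq, mem_sep_iff]
    constructor
    · rintro (⟨h, _⟩ | ⟨h, _⟩) <;> exact h
    · intro h
      rcases le_or_gt (v x) (u x) with h' | h'
      · exact Or.inl ⟨h, h'⟩
      · exact Or.inr ⟨h, h'⟩
  have hdisj : Disjoint S₁ S₂ := by
    rw [Set.disjoint_left]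
    rintro x ⟨_, h1⟩ ⟨_, h2⟩
    exact absurd h2 (not_lt.mpr h1)
  have hS1sub : S₁ ⊆ Ω := fun x hx => hx.1
  have hS2sub : S₂ ⊆ Ω := fun x hx => hx.1
  have hintS1 : IntegrableOn (fun x => u x ^ (1-γ)) S₁ := huint.mono_set hS1sub
  have hintS2 : IntegrableOn (fun x => u x ^ (1-γ)) S₂ := huint.mono_set hS2sub
  set A : ℝ := ∫ x in S₁, u x ^ (1 - γ) with hAdef
  set B : ℝ := ∫ x in S₂, u x ^ (1 - γ) with hBdef
  set S : ℝ≥0∞ := ∫⁻ x in S₂, ENNReal.ofReal (u x ^ (-γ) * v x) with hSdef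
  have hA0 : 0 ≤ A :=
    setIntegral_nonneg hS1m fun x hx => Real.rpow_nonneg (hu0 x (hS1sub hx)) _
  have hB0 : 0 ≤ B :=
    setIntegral_nonneg hS2m fun x hx => Real.rpow_nonneg (hu0 x (hS2sub hx)) _
  have hsplitI : ∫ x in Ω, u x ^ (1-γ) = A + B := by
    rw [← hunion, setIntegral_union hdisj hS2m hintS1 hintS2]
  set K : ℝ := 6 * (A + B) with hKdef
  -- the difference quotient integrand
  set g : ℝ → (EuclideanSpace ℝ (Fin N)) → ℝ := fun t x =>
    (((1 - 2*t) * u x + t * max (v x - u x) 0) ^ (1 - γ) - u x ^ (1 - γ)) / (1 - γ) / t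
    with hgdef
  set I : ℝ → ℝ := fun t =>
    (∫ x in Ω, (((1 - 2*t) * u x + t * max (v x - u x) 0) ^ (1 - γ)
      - u x ^ (1 - γ)) / (1 - γ)) / t with hIdef
  have hwmeas : ∀ t : ℝ, Measurable fun x => (1 - 2*t) * u x + t * max (v x - u x) 0 :=
    fun t => (humeas.const_mul _).add (((hvmeas.sub humeas).max measurable_const).const_mul _)
  have hupmeas : Measurable fun x => u x ^ (1-γ) :=
    (Real.continuous_rpow_const hp0.le).measurable.comp humeas
  have hwpmeas : ∀ t : ℝ,
      Measurable fun x => ((1 - 2*t) * u x + t * max (v x - u x) 0) ^ (1-γ) :=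
    fun t => (Real.continuous_rpow_const hp0.le).measurable.comp (hwmeas t)
  have hgmeas : ∀ t : ℝ, Measurable (g t) :=
    fun t => (((hwpmeas t).sub hupmeas).div_const (1-γ)).div_const t
  have hwp_int : ∀ t ∈ Ioo (0:ℝ) (1/3),
      IntegrableOn (fun x => ((1 - 2*t) * u x + t * max (v x - u x) 0) ^ (1-γ)) Ω := by
    intro t ht
    have hconst : IntegrableOn (fun _ => C ^ (1-γ)) Ω volume :=
      (integrableOn_const_iff).mpr (Or.inr hfin)
    refine Integrable.mono' (huint.add hconst)
      ((hwpmeas t).aestronglyMeasurable) ?_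
    filter_upwards [ae_restrict_mem hΩ] with x hx
    have hu := hu0 x hx
    have hm0 : (0:ℝ) ≤ max (v x - u x) 0 := le_max_right _ _
    have hmC : max (v x - u x) 0 ≤ C := by
      apply max_le _ hC0
      have := hM x hx
      have : v x - u x ≤ M := by linarith
      exact this.trans (le_max_left _ _)
    have hw0 : 0 ≤ (1 - 2*t) * u x + t * max (v x - u x) 0 := by
      have h1 := ht.1; have h2 := ht.2; nlinarith
    have hwle : (1 - 2*t) * u x + t * max (v x - u x) 0 ≤ u x + C := by
      have h1 := ht.1; have h2 := ht.2; nlinarith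
    rw [Real.norm_eq_abs, abs_of_nonneg (Real.rpow_nonneg hw0 _)]
    calc ((1 - 2*t) * u x + t * max (v x - u x) 0) ^ (1-γ)
        ≤ (u x + C) ^ (1-γ) := Real.rpow_le_rpow hw0 hwle hp0.le
      _ ≤ u x ^ (1-γ) + C ^ (1-γ) := aux_subadd hu hC0 hp0.le (by linarith)
      _ ≤ u x ^ (1-γ) + C ^ (1-γ) := le_rfl
  have hg_int : ∀ t ∈ Ioo (0:ℝ) (1/3), IntegrableOn (g t) Ω :=
    fun t ht => (((hwp_int t ht).sub huint).div_const (1-γ)).div_const t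
  have hIg : ∀ t : ℝ, I t = ∫ x in Ω, g t x := by
    intro t
    rw [hIdef, hgdef]
    exact (integral_div t _).symm
  -- the sequence
  set τ : ℕ → ℝ := fun n => 1 / ((n:ℝ) + 4) with hτdef
  have hτmem : ∀ n, τ n ∈ Ioo (0:ℝ) (1/3) := by
    intro n
    have hn : (0:ℝ) ≤ (n:ℝ) := Nat.cast_nonneg n
    constructor
    · positivity
    · rw [hτdef]
      rw [div_lt_div_iff₀ (by linarith) (by norm_num)]
      linarith
  have hτ0 : Tendsto τ atTop (nhds 0) := by
    have h1 : Tendsto (fun n : ℕ => (n:ℝ) + 4) atTop atTop :=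
      tendsto_atTop_add_const_right atTop (4:ℝ) tendsto_natCast_atTop_atTop
    have := h1.inv_tendsto_atTop
    simpa [hτdef, one_div, Pi.inv_def] using this
  have hseq : Tendsto τ atTop (nhdsWithin 0 (Ioo 0 (1/3 : ℝ))) := by
    rw [tendsto_nhdsWithin_iff]
    exact ⟨hτ0, Eventually.of_forall hτmem⟩
  -- a.e. lower bounds
  have hG0 : ∀ n, 0 ≤ᵐ[volume.restrict Ω] fun x => g (τ n) x + 6 * u x ^ (1-γ) := by
    intro n
    filter_upwards [hupos] with x hx
    have h1 := aux_key (V := v x) hγ0 hγ1 hx (hτmem n).1 (hτmem n).2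
    have h2 := aux_lower (V := v x) hγ0 hγ1 hx (hτmem n).1 (hτmem n).2
    simp only [hgdef, Pi.zero_apply]
    linarith
  have hGint : ∀ n, Integrable (fun x => g (τ n) x + 6 * u x ^ (1-γ)) (volume.restrict Ω) :=
    fun n => (hg_int _ (hτmem n)).add (huint.const_mul 6)
  have hJeq : ∀ n, ∫ x in Ω, (g (τ n) x + 6 * u x ^ (1-γ)) = I (τ n) + K := by
    intro n
    rw [integral_add (hg_int _ (hτmem n)) (huint.const_mul 6), integral_const_mul, hsplitI,
      ← hIg, hKdef]
  have hJ0 : ∀ n, 0 ≤ I (τ n) + K := by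
    intro n
    rw [← hJeq n]
    exact integral_nonneg_of_ae (hG0 n)
  have hJof : ∀ n, ENNReal.ofReal (I (τ n) + K)
      = ∫⁻ x in Ω, ENNReal.ofReal (g (τ n) x + 6 * u x ^ (1-γ)) := by
    intro n
    rw [← hJeq n]
    exact ofReal_integral_eq_lintegral_ofReal (hGint n) (hG0 n)
  -- Fatou
  have hFatou : ∫⁻ x in Ω, liminf (fun n => ENNReal.ofReal (g (τ n) x + 6 * u x ^ (1-γ))) atTop
      ≤ liminf (fun n => ∫⁻ x in Ω, ENNReal.ofReal (g (τ n) x + 6 * u x ^ (1-γ))) atTop :=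
    lintegral_liminf_le fun n =>
      ((hgmeas (τ n)).add (hupmeas.const_mul 6)).ennreal_ofReal
  -- pointwise liminf lower bound
  have hTarget : ∀ᵐ x ∂(volume.restrict Ω),
      ENNReal.ofReal (u x ^ (-γ) * (-2 * u x + max (v x - u x) 0) + 6 * u x ^ (1-γ))
        ≤ liminf (fun n => ENNReal.ofReal (g (τ n) x + 6 * u x ^ (1-γ))) atTop := by
    filter_upwards [hupos] with x hx
    have hlim : Tendsto (fun n =>
        ((1 - 2*τ n) * u x + τ n * max (v x - u x) 0) ^ (-γ)
          * (-2 * u x + max (v x - u x) 0) + 6 * u x ^ (1-γ)) atTop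
        (nhds (u x ^ (-γ) * (-2 * u x + max (v x - u x) 0) + 6 * u x ^ (1-γ))) := by
      have hcont : Tendsto (fun t : ℝ => (1 - 2*t) * u x + t * max (v x - u x) 0)
          (nhds 0) (nhds ((1 - 2*0) * u x + 0 * max (v x - u x) 0)) := by
        apply Continuous.tendsto
        fun_prop
      have h1 : Tendsto (fun n => (1 - 2*τ n) * u x + τ n * max (v x - u x) 0)
          atTop (nhds (u x)) := by
        have := hcont.comp hτ0
        simpa [Function.comp_def] using this
      exact ((h1.rpow_const (Or.inl hx.ne')).mul_const _).add_const _
    have hle : ∀ n, ((1 - 2*τ n) * u x + τ n * max (v x - u x) 0) ^ (-γ)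
        * (-2 * u x + max (v x - u x) 0) + 6 * u x ^ (1-γ)
        ≤ g (τ n) x + 6 * u x ^ (1-γ) := by
      intro n
      have h1 := aux_key (V := v x) hγ0 hγ1 hx (hτmem n).1 (hτmem n).2
      simp only [hgdef]
      linarith
    calc ENNReal.ofReal (u x ^ (-γ) * (-2 * u x + max (v x - u x) 0) + 6 * u x ^ (1-γ))
        = liminf (fun n => ENNReal.ofReal
            (((1 - 2*τ n) * u x + τ n * max (v x - u x) 0) ^ (-γ)
              * (-2 * u x + max (v x - u x) 0) + 6 * u x ^ (1-γ))) atTop :=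
          ((ENNReal.continuous_ofReal.tendsto _).comp hlim).liminf_eq.symm
      _ ≤ liminf (fun n => ENNReal.ofReal (g (τ n) x + 6 * u x ^ (1-γ))) atTop :=
          liminf_le_liminf (Eventually.of_forall fun n =>
            ENNReal.ofReal_le_ofReal (hle n))
  -- value of the target lintegral
  have hTval : ∫⁻ x in Ω,
      ENNReal.ofReal (u x ^ (-γ) * (-2 * u x + max (v x - u x) 0) + 6 * u x ^ (1-γ))
      = ENNReal.ofReal (4*A) + (ENNReal.ofReal (3*B) + S) := by
    have hrw : (volume.restrict Ω) = volume.restrict (S₁ ∪ S₂) := by rw [hunion]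
    rw [hrw, lintegral_union hS2m hdisj]
    have hpart1 : ∫⁻ x in S₁,
        ENNReal.ofReal (u x ^ (-γ) * (-2 * u x + max (v x - u x) 0) + 6 * u x ^ (1-γ))
        = ENNReal.ofReal (4*A) := by
      have hcongr : ∫⁻ x in S₁,
          ENNReal.ofReal (u x ^ (-γ) * (-2 * u x + max (v x - u x) 0) + 6 * u x ^ (1-γ))
          = ∫⁻ x in S₁, ENNReal.ofReal (4 * u x ^ (1-γ)) := by
        apply lintegral_congr_ae
        filter_upwards [ae_restrict_mem hS1m,
          ae_restrict_of_ae_restrict_of_subset hS1sub hupos] with x hx hux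
        have hvu : v x ≤ u x := hx.2
        have hmax : max (v x - u x) 0 = 0 := max_eq_right (by linarith)
        have h6 : u x ^ (1-γ) = u x ^ (-γ) * u x := by
          rw [show (1-γ) = -γ + 1 by ring, Real.rpow_add hux, Real.rpow_one]
        congr 1
        rw [hmax, h6]
        ring
      rw [hcongr, ← ofReal_integral_eq_lintegral_ofReal (hintS1.const_mul 4)]
      · rw [integral_const_mul]
      · filter_upwards [ae_restrict_of_ae_restrict_of_subset hS1sub hupos] with x hx
        have : (0:ℝ) ≤ u x ^ (1-γ) := Real.rpow_nonneg hx.le _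
        simp only [Pi.zero_apply]
        linarith
    have hpart2 : ∫⁻ x in S₂,
        ENNReal.ofReal (u x ^ (-γ) * (-2 * u x + max (v x - u x) 0) + 6 * u x ^ (1-γ))
        = ENNReal.ofReal (3*B) + S := by
      have hcongr : ∫⁻ x in S₂,
          ENNReal.ofReal (u x ^ (-γ) * (-2 * u x + max (v x - u x) 0) + 6 * u x ^ (1-γ))
          = ∫⁻ x in S₂, (ENNReal.ofReal (3 * u x ^ (1-γ)) + ENNReal.ofReal (u x ^ (-γ) * v x)) := by
        apply lintegral_congr_ae
        filter_upwards [ae_restrict_mem hS2m,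
          ae_restrict_of_ae_restrict_of_subset hS2sub hupos] with x hx hux
        have huv : u x < v x := hx.2
        have hv := hv0 x hx.1
        have hmax : max (v x - u x) 0 = v x - u x := max_eq_left (by linarith)
        have h6 : u x ^ (1-γ) = u x ^ (-γ) * u x := by
          rw [show (1-γ) = -γ + 1 by ring, Real.rpow_add hux, Real.rpow_one]
        have hId : u x ^ (-γ) * (-2 * u x + max (v x - u x) 0) + 6 * u x ^ (1-γ)
            = 3 * u x ^ (1-γ) + u x ^ (-γ) * v x := by
          rw [hmax, h6]; ring
        rw [hId, ENNReal.ofReal_add]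
        · positivity
        · have : (0:ℝ) ≤ u x ^ (-γ) := Real.rpow_nonneg hux.le _
          positivity
      rw [hcongr, lintegral_add_left (hupmeas.const_mul 3).ennreal_ofReal, hSdef]
      congr 1
      rw [← ofReal_integral_eq_lintegral_ofReal (hintS2.const_mul 3)]
      · rw [integral_const_mul]
      · filter_upwards [ae_restrict_of_ae_restrict_of_subset hS2sub hupos] with x hx
        have : (0:ℝ) ≤ u x ^ (1-γ) := Real.rpow_nonneg hx.le _
        simp only [Pi.zero_apply]
        linarith
    rw [hpart1, hpart2]
  have hFatouFinal : ENNReal.ofReal (4*A) + (ENNReal.ofReal (3*B) + S)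
      ≤ liminf (fun n => ENNReal.ofReal (I (τ n) + K)) atTop := by
    calc ENNReal.ofReal (4*A) + (ENNReal.ofReal (3*B) + S)
        = ∫⁻ x in Ω, ENNReal.ofReal
            (u x ^ (-γ) * (-2 * u x + max (v x - u x) 0) + 6 * u x ^ (1-γ)) := hTval.symm
      _ ≤ ∫⁻ x in Ω,
            liminf (fun n => ENNReal.ofReal (g (τ n) x + 6 * u x ^ (1-γ))) atTop :=
          lintegral_mono_ae hTarget
      _ ≤ liminf (fun n => ∫⁻ x in Ω, ENNReal.ofReal (g (τ n) x + 6 * u x ^ (1-γ))) atTop :=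
          hFatou
      _ = liminf (fun n => ENNReal.ofReal (I (τ n) + K)) atTop := by
          congr 1
          funext n
          rw [hJof n]
  -- core lemma
  have hcore : ∀ r : ℝ, ((r : ℝ) : EReal) < ((-2 * A - 3 * B : ℝ) : EReal) + S.toEReal →
      ∀ᶠ n in atTop, r < I (τ n) := by
    intro r hr
    by_cases hrK : r + K < 0
    · exact Eventually.of_forall fun n => by have := hJ0 n; linarith
    push_neg at hrK
    have hoflt : ENNReal.ofReal (r + K)
        < ENNReal.ofReal (4*A) + (ENNReal.ofReal (3*B) + S) := by
      by_cases hS : S = ⊤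
      · rw [hS]
        simp only [add_top]
        exact ENNReal.ofReal_lt_top.trans_le le_rfl
      · have hs0 : 0 ≤ S.toReal := ENNReal.toReal_nonneg
        have hSc : ENNReal.ofReal S.toReal = S := ENNReal.ofReal_toReal hS
        have hSE : S.toEReal = ((S.toReal : ℝ) : EReal) := by
          have h1 : (S : EReal) ≠ ⊤ := fun h => hS (EReal.coe_ennreal_eq_top_iff.mp h)
          have h2 : (S : EReal) ≠ ⊥ := (EReal.bot_lt_coe_ennreal S).ne'
          conv_lhs => rw [← EReal.coe_toReal h1 h2]
          rw [EReal.toReal_coe_ennreal]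
        rw [hSE, ← EReal.coe_add] at hr
        have hrlt : r < -2*A - 3*B + S.toReal := EReal.coe_lt_coe_iff.mp hr
        have hlt2 : r + K < 4*A + 3*B + S.toReal := by rw [hKdef]; linarith
        calc ENNReal.ofReal (r + K) < ENNReal.ofReal (4*A + 3*B + S.toReal) := by
              rw [ENNReal.ofReal_lt_ofReal_iff_of_nonneg hrK]; exact hlt2
          _ = ENNReal.ofReal (4*A) + (ENNReal.ofReal (3*B) + ENNReal.ofReal S.toReal) := by
              rw [← ENNReal.ofReal_add (by linarith) hs0,
                ← ENNReal.ofReal_add (by linarith) (by positivity)]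
              ring_nf
          _ = ENNReal.ofReal (4*A) + (ENNReal.ofReal (3*B) + S) := by rw [hSc]
    have hlt : ENNReal.ofReal (r + K) < liminf (fun n => ENNReal.ofReal (I (τ n) + K)) atTop :=
      lt_of_lt_of_le hoflt hFatouFinal
    filter_upwards [eventually_lt_of_lt_liminf hlt] with n hn
    by_contra hcon
    push_neg at hcon
    exact absurd hn (not_lt.mpr (ENNReal.ofReal_le_ofReal (by linarith)))
  -- final assembly
  show ((-2 * A - 3 * B : ℝ) : EReal) + S.toEReal
      ≤ limsup (fun t : ℝ => ((I t : ℝ) : EReal)) (nhdsWithin 0 (Ioo 0 (1/3 : ℝ)))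
  have hstep1 : ((-2 * A - 3 * B : ℝ) : EReal) + S.toEReal
      ≤ liminf (fun n => ((I (τ n) : ℝ) : EReal)) atTop := by
    rw [le_liminf_iff]
    intro y hy
    obtain ⟨r, hyr, hrlt⟩ := EReal.exists_between_coe_real hy
    filter_upwards [hcore r hrlt] with n hn
    exact hyr.trans (EReal.coe_lt_coe_iff.mpr hn)
  calc ((-2 * A - 3 * B : ℝ) : EReal) + S.toEReal
      ≤ liminf (fun n => ((I (τ n) : ℝ) : EReal)) atTop := hstep1
    _ ≤ limsup (fun n => ((I (τ n) : ℝ) : EReal)) atTop := liminf_le_limsup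
    _ = limsup (fun t : ℝ => ((I t : ℝ) : EReal)) (map τ atTop) := by
        rw [Filter.limsup, Filter.limsup, Filter.map_map]
        rfl
    _ ≤ limsup (fun t : ℝ => ((I t : ℝ) : EReal)) (nhdsWithin 0 (Ioo 0 (1/3 : ℝ))) :=
        limsup_le_limsup_of_le hseq
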